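/- Let w(r) = log(2/(1-r²)) and suppose r₁(t) → 1⁻ as t → ∞, and suppose m(t) = (1/5)[(1/4)z⁴ + (2/9)zP + (1/3)z³ + (1/3)P - C(t)] where z(t) = r₁w'(r₁) + O(s³), z³ = (r₁w'(r₁))³ + 12(r₁w'(r₁))²(log r₁)³·f̄₀ + o(s), z⁴ = (r₁w'(r₁))⁴ + 16(log r₁)³(r₁w'(r₁))³·f̄₀ + o(1), P(t) = 3(r₁w'(r₁))² + O(s²), and C(t) = (r₁⁴e^{4w(r₁)})/4 + f̄₀·(2/(1-r₁²))⁴(log r₁)⁴r₁⁴ + O(s), with s = |log r₁| and f̄₀ ∈ ℝ. Then lim_{t→∞} m(t) = -f̄₀. -/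

import Mathlib

open Filter Topology Asymptotics

/-- `w(r) = log(2/(1-r²))`, the hyperbolic conformal factor. -/
noncomputable def wHyp (r : ℝ) : ℝ := Real.log (2 / (1 - r ^ 2))

/-- `w'(r) = 2r/(1-r²)`. -/
noncomputable def wHypDeriv (r : ℝ) : ℝ := 2 * r / (1 - r ^ 2)

set_option maxHeartbeats 2000000 in
/-- Boundary limit of the quasi-local mass: with `r₁(t) → 1⁻`, `s = |log r₁|`, and the
asymptotic expansions of `z`, `z³`, `z⁴`, `P` and `C` as in the paper, the quasi-local
mass `m(t) = (1/5)[(1/4)z⁴ + (2/9)zP + (1/3)z³ + (1/3)P - C]` tends to `-f̄₀`. -/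
theorem quasi_local_mass_boundary_limit (r₁ z P C m : ℝ → ℝ) (f0 : ℝ)
    (hr₁ : Tendsto r₁ atTop (𝓝[<] (1:ℝ)))
    (hz : (fun t => z t - r₁ t * wHypDeriv (r₁ t))
        =O[atTop] fun t => |Real.log (r₁ t)| ^ 3)
    (hz3 : (fun t => (z t) ^ 3 - ((r₁ t * wHypDeriv (r₁ t)) ^ 3
          + 12 * (r₁ t * wHypDeriv (r₁ t)) ^ 2 * (Real.log (r₁ t)) ^ 3 * f0))
        =o[atTop] fun t => |Real.log (r₁ t)|)
    (hz4 : (fun t => (z t) ^ 4 - ((r₁ t * wHypDeriv (r₁ t)) ^ 4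
          + 16 * (Real.log (r₁ t)) ^ 3 * (r₁ t * wHypDeriv (r₁ t)) ^ 3 * f0))
        =o[atTop] fun _ => (1:ℝ))
    (hP : (fun t => P t - 3 * (r₁ t * wHypDeriv (r₁ t)) ^ 2)
        =O[atTop] fun t => |Real.log (r₁ t)| ^ 2)
    (hC : (fun t => C t - ((r₁ t) ^ 4 * Real.exp (4 * wHyp (r₁ t)) / 4
          + f0 * (2 / (1 - (r₁ t) ^ 2)) ^ 4 * (Real.log (r₁ t)) ^ 4 * (r₁ t) ^ 4))
        =O[atTop] fun t => |Real.log (r₁ t)|)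
    (hm : ∀ t, m t = (1/5) * ((1/4) * (z t) ^ 4 + (2/9) * z t * P t
        + (1/3) * (z t) ^ 3 + (1/3) * P t - C t)) :
    Tendsto m atTop (𝓝 (-f0)) := by
  have hr1' : Tendsto r₁ atTop (𝓝 (1:ℝ)) := hr₁.mono_right nhdsWithin_le_nhds
  have hlt : ∀ᶠ t in atTop, r₁ t < 1 := hr₁ self_mem_nhdsWithin
  have hgt : ∀ᶠ t in atTop, (1/2:ℝ) < r₁ t :=
    hr1'.eventually (eventually_gt_nhds (by norm_num))
  -- log r₁ → 0
  have hL0 : Tendsto (fun t => Real.log (r₁ t)) atTop (𝓝 0) := by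
    have h := (Real.continuousAt_log one_ne_zero).tendsto.comp hr1'
    simpa [Function.comp_def] using h
  have hs0 : Tendsto (fun t => |Real.log (r₁ t)|) atTop (𝓝 0) := by
    simpa using hL0.abs
  -- (r₁ w'(r₁)) * log r₁ → -1
  have hslope : Tendsto (fun r : ℝ => Real.log r / (r - 1)) (𝓝[<] (1:ℝ)) (𝓝 1) := by
    have h := Real.hasDerivAt_log one_ne_zero
    rw [hasDerivAt_iff_tendsto_slope] at h
    have h2 := h.mono_left (nhdsWithin_mono 1 (fun x hx => ne_of_lt hx))
    simp only [slope_fun_def, Real.log_one, vsub_eq_sub, sub_zero, inv_one, smul_eq_mul] at h2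
    refine h2.congr (fun r => ?_)
    ring
  have hA : Tendsto (fun r : ℝ => 2*r^2/(1+r)) (𝓝[<] (1:ℝ)) (𝓝 1) := by
    have hc : ContinuousAt (fun r : ℝ => 2*r^2/(1+r)) 1 :=
      ContinuousAt.div (by fun_prop) (by fun_prop) (by norm_num)
    have h2 : Tendsto (fun r : ℝ => 2*r^2/(1+r)) (𝓝[<] (1:ℝ)) (𝓝 (2*1^2/(1+1))) :=
      hc.tendsto.mono_left nhdsWithin_le_nhds
    norm_num at h2
    exact h2
  have hF : Tendsto (fun r : ℝ => r * wHypDeriv r * Real.log r) (𝓝[<] (1:ℝ)) (𝓝 (-1)) := by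
    have hmul : Tendsto (fun r : ℝ => -(2*r^2/(1+r) * (Real.log r/(r-1))))
        (𝓝[<] (1:ℝ)) (𝓝 (-1)) := by
      have := (hA.mul hslope).neg
      simpa using this
    refine hmul.congr' ?_
    filter_upwards [Ioo_mem_nhdsLT_of_mem (by norm_num : (1:ℝ) ∈ Set.Ioc (1/2) 1)] with r hr
    obtain ⟨hr1, hr2⟩ := hr
    have h0 : (1:ℝ) + r ≠ 0 := by nlinarith
    have h1 : r - 1 ≠ 0 := by nlinarith
    have h2 : (1:ℝ) - r^2 ≠ 0 := by nlinarith
    rw [wHypDeriv]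
    field_simp
    ring
  have haL : Tendsto (fun t => r₁ t * wHypDeriv (r₁ t) * Real.log (r₁ t)) atTop (𝓝 (-1)) := by
    have := hF.comp hr₁
    simpa [Function.comp_def] using this
  -- limit of (aL)^4 / r^4
  have hr4 : Tendsto (fun t => (r₁ t)^4) atTop (𝓝 1) := by
    simpa using hr1'.pow 4
  have hALr : Tendsto (fun t => (r₁ t * wHypDeriv (r₁ t) * Real.log (r₁ t))^4 / (r₁ t)^4)
      atTop (𝓝 1) := by
    have := (haL.pow 4).div hr4 one_ne_zero
    norm_num at this
    exact this
  -- main term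
  have hMain : Tendsto (fun t => f0 * (4*(r₁ t * wHypDeriv (r₁ t) * Real.log (r₁ t))^3
      + 4*(r₁ t * wHypDeriv (r₁ t) * Real.log (r₁ t))^2 * Real.log (r₁ t)
      - (r₁ t * wHypDeriv (r₁ t) * Real.log (r₁ t))^4 / (r₁ t)^4))
      atTop (𝓝 (-5 * f0)) := by
    have h := (tendsto_const_nhds (x := f0)).mul
      ((((haL.pow 3).const_mul 4).add (((haL.pow 2).mul hL0).const_mul 4)).sub hALr)
    norm_num at h
    have hv : (-(f0 * 5) : ℝ) = -5 * f0 := by ring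
    rw [hv] at h
    exact h.congr (fun t => by ring)
  -- error terms all tend to 0
  have e4 : Tendsto (fun t => (z t) ^ 4 - ((r₁ t * wHypDeriv (r₁ t)) ^ 4
      + 16 * (Real.log (r₁ t)) ^ 3 * (r₁ t * wHypDeriv (r₁ t)) ^ 3 * f0)) atTop (𝓝 0) :=
    (Asymptotics.isLittleO_one_iff ℝ).mp hz4
  have e3 : Tendsto (fun t => (z t) ^ 3 - ((r₁ t * wHypDeriv (r₁ t)) ^ 3
      + 12 * (r₁ t * wHypDeriv (r₁ t)) ^ 2 * (Real.log (r₁ t)) ^ 3 * f0)) atTop (𝓝 0) :=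
    hz3.isBigO.trans_tendsto hs0
  have hs2 : Tendsto (fun t => |Real.log (r₁ t)| ^ 2) atTop (𝓝 0) := by
    simpa using hs0.pow 2
  have eP : Tendsto (fun t => P t - 3 * (r₁ t * wHypDeriv (r₁ t)) ^ 2) atTop (𝓝 0) :=
    hP.trans_tendsto hs2
  have eC : Tendsto (fun t => C t - ((r₁ t) ^ 4 * Real.exp (4 * wHyp (r₁ t)) / 4
      + f0 * (2 / (1 - (r₁ t) ^ 2)) ^ 4 * (Real.log (r₁ t)) ^ 4 * (r₁ t) ^ 4)) atTop (𝓝 0) :=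
    hC.trans_tendsto hs0
  have eaP : Tendsto (fun t => (r₁ t * wHypDeriv (r₁ t)) *
      (P t - 3 * (r₁ t * wHypDeriv (r₁ t)) ^ 2)) atTop (𝓝 0) := by
    have hb := (isBigO_refl (fun t => r₁ t * wHypDeriv (r₁ t)) atTop).mul hP
    refine hb.trans_tendsto ?_
    have h2 : Tendsto (fun t => (r₁ t * wHypDeriv (r₁ t) * Real.log (r₁ t)) * Real.log (r₁ t))
        atTop (𝓝 0) := by
      have := haL.mul hL0
      simpa using this
    refine h2.congr (fun t => ?_)
    rw [sq_abs]
    ring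
  have eA2z : Tendsto (fun t => (r₁ t * wHypDeriv (r₁ t)) ^ 2 *
      (z t - r₁ t * wHypDeriv (r₁ t))) atTop (𝓝 0) := by
    have hb := (isBigO_refl (fun t => (r₁ t * wHypDeriv (r₁ t)) ^ 2) atTop).mul hz
    refine hb.trans_tendsto ?_
    have h2 : Tendsto (fun t => (r₁ t * wHypDeriv (r₁ t) * Real.log (r₁ t)) ^ 2
        * |Real.log (r₁ t)|) atTop (𝓝 0) := by
      have := (haL.pow 2).mul hs0
      simpa using this
    refine h2.congr (fun t => ?_)
    rw [show |Real.log (r₁ t)| ^ 3 = |Real.log (r₁ t)| ^ 2 * |Real.log (r₁ t)| by ring, sq_abs]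
    ring
  have ezP : Tendsto (fun t => (z t - r₁ t * wHypDeriv (r₁ t)) *
      (P t - 3 * (r₁ t * wHypDeriv (r₁ t)) ^ 2)) atTop (𝓝 0) := by
    refine (hz.mul hP).trans_tendsto ?_
    have := (hs0.pow 3).mul (hs0.pow 2)
    simpa using this
  -- combined error
  have hErr : Tendsto (fun t =>
      (1/4) * ((z t) ^ 4 - ((r₁ t * wHypDeriv (r₁ t)) ^ 4
        + 16 * (Real.log (r₁ t)) ^ 3 * (r₁ t * wHypDeriv (r₁ t)) ^ 3 * f0))
      + (2/9) * ((r₁ t * wHypDeriv (r₁ t)) * (P t - 3 * (r₁ t * wHypDeriv (r₁ t)) ^ 2)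
        + 3 * ((r₁ t * wHypDeriv (r₁ t)) ^ 2 * (z t - r₁ t * wHypDeriv (r₁ t)))
        + (z t - r₁ t * wHypDeriv (r₁ t)) * (P t - 3 * (r₁ t * wHypDeriv (r₁ t)) ^ 2))
      + (1/3) * ((z t) ^ 3 - ((r₁ t * wHypDeriv (r₁ t)) ^ 3
        + 12 * (r₁ t * wHypDeriv (r₁ t)) ^ 2 * (Real.log (r₁ t)) ^ 3 * f0))
      + (1/3) * (P t - 3 * (r₁ t * wHypDeriv (r₁ t)) ^ 2)
      - (C t - ((r₁ t) ^ 4 * Real.exp (4 * wHyp (r₁ t)) / 4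
        + f0 * (2 / (1 - (r₁ t) ^ 2)) ^ 4 * (Real.log (r₁ t)) ^ 4 * (r₁ t) ^ 4)))
      atTop (𝓝 0) := by
    have h := ((((e4.const_mul (1/4)).add
      (((eaP.add ((eA2z.const_mul 3))).add ezP).const_mul (2/9))).add
      (e3.const_mul (1/3))).add (eP.const_mul (1/3))).sub eC
    simpa using h
  -- final combination
  have hfinal : Tendsto (fun t => (1/5) * (
      f0 * (4*(r₁ t * wHypDeriv (r₁ t) * Real.log (r₁ t))^3
        + 4*(r₁ t * wHypDeriv (r₁ t) * Real.log (r₁ t))^2 * Real.log (r₁ t)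
        - (r₁ t * wHypDeriv (r₁ t) * Real.log (r₁ t))^4 / (r₁ t)^4)
      + ((1/4) * ((z t) ^ 4 - ((r₁ t * wHypDeriv (r₁ t)) ^ 4
        + 16 * (Real.log (r₁ t)) ^ 3 * (r₁ t * wHypDeriv (r₁ t)) ^ 3 * f0))
      + (2/9) * ((r₁ t * wHypDeriv (r₁ t)) * (P t - 3 * (r₁ t * wHypDeriv (r₁ t)) ^ 2)
        + 3 * ((r₁ t * wHypDeriv (r₁ t)) ^ 2 * (z t - r₁ t * wHypDeriv (r₁ t)))
        + (z t - r₁ t * wHypDeriv (r₁ t)) * (P t - 3 * (r₁ t * wHypDeriv (r₁ t)) ^ 2))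
      + (1/3) * ((z t) ^ 3 - ((r₁ t * wHypDeriv (r₁ t)) ^ 3
        + 12 * (r₁ t * wHypDeriv (r₁ t)) ^ 2 * (Real.log (r₁ t)) ^ 3 * f0))
      + (1/3) * (P t - 3 * (r₁ t * wHypDeriv (r₁ t)) ^ 2)
      - (C t - ((r₁ t) ^ 4 * Real.exp (4 * wHyp (r₁ t)) / 4
        + f0 * (2 / (1 - (r₁ t) ^ 2)) ^ 4 * (Real.log (r₁ t)) ^ 4 * (r₁ t) ^ 4)))))
      atTop (𝓝 (-f0)) := by
    have h := (hMain.add hErr).const_mul (1/5)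
    have hval : (1/5 : ℝ) * (-5 * f0 + 0) = -f0 := by ring
    rw [hval] at h
    exact h
  refine hfinal.congr' ?_
  filter_upwards [hlt, hgt] with t h1t h2t
  have hr0 : r₁ t ≠ 0 := ne_of_gt (by linarith)
  have hu : (0:ℝ) < 1 - (r₁ t)^2 := by nlinarith
  have hexp : Real.exp (4 * wHyp (r₁ t)) = (2/(1-(r₁ t)^2))^4 := by
    rw [wHyp, show (4:ℝ) * Real.log (2/(1-(r₁ t)^2)) = Real.log ((2/(1-(r₁ t)^2))^4) by
      rw [Real.log_pow]; push_cast; ring]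
    exact Real.exp_log (by positivity)
  rw [hm t]
  simp only [wHypDeriv]
  rw [hexp]
  field_simp
  ring
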